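/- For the compression-and-randomisation cipher, the mutual information between the message M' and the ciphertext E is zero: I(M'; E) = 0. -/

import Mathlib

open Finset

/-- The compression-and-randomisation cipher. -/
def encrypt {l : ℕ} (x : List Bool) (k r : Fin l → Bool) : Fin l → Bool :=
  fun i => if h : (i : ℕ) < x.length then Bool.xor (x.get ⟨i, h⟩) (k i) else r i

/-- The joint probability `P(M' = m, E = e)` of message `m` and ciphertext `e`
(keys and padding bits i.i.d. uniform, independent of the message). -/
noncomputable def pJoint {M : Type*} [Fintype M] (P : M → ℝ) (φ : M → List Bool) (l : ℕ)
    (m : M) (e : Fin l → Bool) : ℝ :=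
  P m * (((univ.filter (fun kr : (Fin l → Bool) × (Fin l → Bool) =>
      encrypt (φ m) kr.1 kr.2 = e)).card : ℝ) / ((2 ^ l) * (2 ^ l)))


def encEquiv {l : ℕ} (x : List Bool) (e : Fin l → Bool) :
    {kr : (Fin l → Bool) × (Fin l → Bool) // encrypt x kr.1 kr.2 = e} ≃ (Fin l → Bool) where
  toFun p i := if (i : ℕ) < x.length then p.1.2 i else p.1.1 i
  invFun f := ⟨(fun i => if h : (i : ℕ) < x.length then Bool.xor (x.get ⟨i, h⟩) (e i) else f i,
                fun i => if (i : ℕ) < x.length then f i else e i), by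
    funext i
    unfold encrypt
    by_cases h : (i : ℕ) < x.length <;> simp [h, Bool.xor]⟩
  left_inv := by
    rintro ⟨⟨k, r⟩, h⟩
    have h' := congrFun h
    unfold encrypt at h'
    apply Subtype.ext
    ext i
    · by_cases hi : (i : ℕ) < x.length
      · have hei : e i = Bool.xor (x.get ⟨i, hi⟩) (k i) := by
          rw [← h' i]; simp [hi]
        simp only [hi, if_true, dif_pos, hei]
        cases x.get ⟨i, hi⟩ <;> cases k i <;> rfl
      · simp [hi]
    · by_cases hi : (i : ℕ) < x.length
      · simp [hi]
      · have := h' i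
        simp only [hi, dif_neg, not_false_iff] at this
        simp [hi, this]
  right_inv := by
    intro f
    funext i
    by_cases hi : (i : ℕ) < x.length <;> simp [hi]

lemma count_eq {l : ℕ} (x : List Bool) (e : Fin l → Bool) :
    (univ.filter (fun kr : (Fin l → Bool) × (Fin l → Bool) =>
      encrypt x kr.1 kr.2 = e)).card = 2 ^ l := by
  have := Fintype.card_congr (encEquiv x e)
  simpa [Fintype.card_subtype] using this

/-- The mutual information between message and ciphertext is zero:
`I(M';E) = H(M') + H(E) − H(M',E) = 0`. -/
theorem mutual_information_zero
    {M : Type*} [Fintype M] [Nonempty M]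
    (P : M → ℝ) (hP0 : ∀ m, 0 ≤ P m) (hP1 : ∑ m, P m = 1)
    (φ : M → List Bool) (hinj : Function.Injective φ)
    (hpf : ∀ m m', m ≠ m' → ¬ (φ m <+: φ m'))
    (l : ℕ) (hl : ∀ m, (φ m).length ≤ l) (hmax : ∃ m, (φ m).length = l) :
    (-∑ m, P m * Real.logb 2 (P m)) +
      (-∑ e : Fin l → Bool,
          (∑ m, pJoint P φ l m e) * Real.logb 2 (∑ m, pJoint P φ l m e)) -
      (-∑ m, ∑ e : Fin l → Bool,
          pJoint P φ l m e * Real.logb 2 (pJoint P φ l m e)) = 0 := by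
  have hc0 : ((2 : ℝ) ^ l) ≠ 0 := by positivity
  have hlogc : Real.logb 2 ((2 : ℝ) ^ l) = l := by
    rw [Real.logb_pow]; simp
  have hpJ : ∀ m e, pJoint P φ l m e = P m / (2 ^ l : ℝ) := by
    intro m e
    unfold pJoint
    rw [count_eq]
    push_cast
    field_simp
  have hsum : ∀ e : Fin l → Bool, ∑ m, pJoint P φ l m e = 1 / (2 ^ l : ℝ) := by
    intro e
    simp only [hpJ]
    rw [← Finset.sum_div, hP1]
  have hcard : Fintype.card (Fin l → Bool) = 2 ^ l := by simp
  have hterm : ∀ m, P m * Real.logb 2 (P m / 2 ^ l) = P m * Real.logb 2 (P m) - P m * l := by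
    intro m
    rcases eq_or_lt_of_le (hP0 m) with h | h
    · simp [← h]
    · rw [Real.logb_div (ne_of_gt h) hc0, hlogc]; ring
  have hEsum : ∑ e : Fin l → Bool,
      (∑ m, pJoint P φ l m e) * Real.logb 2 (∑ m, pJoint P φ l m e) = -l := by
    simp only [hsum]
    rw [Finset.sum_const, card_univ, hcard, nsmul_eq_mul]
    rw [one_div, Real.logb_inv, hlogc]
    push_cast
    field_simp
  have hJsum : ∀ m, ∑ e : Fin l → Bool,
      pJoint P φ l m e * Real.logb 2 (pJoint P φ l m e)
      = P m * Real.logb 2 (P m) - P m * l := by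
    intro m
    simp only [hpJ]
    rw [Finset.sum_const, card_univ, hcard, nsmul_eq_mul]
    rw [← hterm m]
    push_cast
    field_simp
  simp only [hEsum, hJsum, Finset.sum_sub_distrib, ← Finset.sum_mul, hP1]
  ring
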